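/- For every integer s ≥ 1, one has A_s = (2/π) · ∫_0^1 √((1−t)/t) · (2/(1+√(1−t)))^s dt, where A_s = ∑_{(m₁,…,m_s) ∈ ℕ^s} Cat_{m₁} ⋯ Cat_{m_s} · Cat_{m₁+⋯+m_s} · 16^{−(m₁+⋯+m_s)}. -/

import Mathlib

open Real

open MeasureTheory


lemma gammaHalf : ∀ n : ℕ, Real.Gamma ((n : ℝ) + 1/2)
    = Real.sqrt π * (2*n).factorial / (4^n * n.factorial) := by
  intro n
  induction n with
  | zero =>
      rw [show ((0:ℕ):ℝ) + 1/2 = 1/2 by norm_num, Real.Gamma_one_half_eq]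
      simp
  | succ n ih =>
      have h0 : ((n : ℝ) + 1/2) ≠ 0 := by positivity
      have : ((n+1 : ℕ) : ℝ) + 1/2 = ((n:ℝ) + 1/2) + 1 := by push_cast; ring
      rw [this, Real.Gamma_add_one h0, ih]
      have h1 : (2*(n+1)) = (2*n+1) + 1 := by ring
      rw [h1]
      push_cast [Nat.factorial_succ]
      have h4 : (4:ℝ)^(n+1) = 4 * 4^n := by ring
      rw [h4]
      have hf : (0:ℝ) < (n.factorial : ℝ) := by exact_mod_cast n.factorial_pos
      field_simp
      ring

lemma catMulFact (n : ℕ) :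
    catalan n * (n.factorial * (n+1).factorial) = (2*n).factorial := by
  have h1 := succ_mul_catalan_eq_centralBinom n
  have h2 := Nat.choose_mul_factorial_mul_factorial (show n ≤ 2*n by omega)
  have h3 : 2*n - n = n := by omega
  rw [h3] at h2
  calc catalan n * (n.factorial * (n+1).factorial)
      = ((n+1) * catalan n) * (n.factorial * n.factorial) := by
        rw [Nat.factorial_succ]; ring
    _ = (2*n).choose n * (n.factorial * n.factorial) := by
        rw [h1, Nat.centralBinom_eq_two_mul_choose]
    _ = (2*n).factorial := by rw [← h2]; ring

lemma betaVal (n : ℕ) :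
    ∫ t in (0:ℝ)..1, t ^ ((n:ℝ) - 1/2) * (1-t) ^ ((1:ℝ)/2)
      = π * catalan n / (2 * 4^n) := by
  have hu : (0:ℝ) < (n:ℝ) + 1/2 := by positivity
  have hB := Complex.Gamma_mul_Gamma_eq_betaIntegral
    (s := (((n:ℝ) + 1/2 : ℝ) : ℂ)) (t := ((3/2 : ℝ) : ℂ))
    (by simpa using hu) (by norm_num)
  -- identify the beta integral with the real integral
  have hBeq : Complex.betaIntegral (((n:ℝ) + 1/2 : ℝ) : ℂ) ((3/2 : ℝ) : ℂ)
      = ((∫ t in (0:ℝ)..1, t ^ ((n:ℝ) - 1/2) * (1-t) ^ ((1:ℝ)/2) : ℝ) : ℂ) := by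
    rw [Complex.betaIntegral, ← intervalIntegral.integral_ofReal]
    refine intervalIntegral.integral_congr fun x hx => ?_
    rw [Set.uIcc_of_le (by norm_num : (0:ℝ) ≤ 1)] at hx
    push_cast
    rw [Complex.ofReal_cpow hx.1, Complex.ofReal_cpow (by linarith [hx.2] : (0:ℝ) ≤ 1 - x)]
    push_cast
    ring_nf
  rw [hBeq] at hB
  have hG1 : Complex.Gamma (((n:ℝ) + 1/2 : ℝ) : ℂ) = (Real.Gamma ((n:ℝ) + 1/2) : ℂ) :=
    Complex.Gamma_ofReal _
  have hG2 : Complex.Gamma ((3/2 : ℝ) : ℂ) = (Real.Gamma (3/2 : ℝ) : ℂ) :=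
    Complex.Gamma_ofReal _
  have hsum : (((n:ℝ) + 1/2 : ℝ) : ℂ) + ((3/2 : ℝ) : ℂ) = (((n:ℝ) + 2 : ℝ) : ℂ) := by
    push_cast; ring
  rw [hG1, hG2, hsum, Complex.Gamma_ofReal] at hB
  have hreal : Real.Gamma ((n:ℝ) + 1/2) * Real.Gamma (3/2)
      = Real.Gamma ((n:ℝ) + 2) * ∫ t in (0:ℝ)..1, t ^ ((n:ℝ) - 1/2) * (1-t) ^ ((1:ℝ)/2) := by
    exact_mod_cast hB
  have h32 : Real.Gamma (3/2 : ℝ) = Real.sqrt π / 2 := by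
    have : (3/2 : ℝ) = 1/2 + 1 := by norm_num
    rw [this, Real.Gamma_add_one (by norm_num), Real.Gamma_one_half_eq]; ring
  have hfac : Real.Gamma ((n:ℝ) + 2) = ((n+1).factorial : ℝ) := by
    have : ((n:ℝ) + 2) = ((n+1 : ℕ) : ℝ) + 1 := by push_cast; ring
    rw [this, Real.Gamma_nat_eq_factorial]
  rw [gammaHalf n, h32, hfac] at hreal
  have hπ : Real.sqrt π * Real.sqrt π = π := Real.mul_self_sqrt Real.pi_pos.le
  have hfac1 : (0:ℝ) < (n.factorial : ℝ) := by exact_mod_cast n.factorial_pos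
  have hfac2 : (0:ℝ) < ((n+1).factorial : ℝ) := by exact_mod_cast (n+1).factorial_pos
  have hkey : (catalan n : ℝ) * ((n.factorial : ℝ) * ((n+1).factorial : ℝ)) = ((2*n).factorial : ℝ) := by
    exact_mod_cast catMulFact n
  have h4 : (0:ℝ) < 4^n := by positivity
  set I := ∫ t in (0:ℝ)..1, t ^ ((n:ℝ) - 1/2) * (1-t) ^ ((1:ℝ)/2) with hIdef
  have hcat : (catalan n : ℝ) = ((2*n).factorial:ℝ) / ((n.factorial:ℝ) * ((n+1).factorial:ℝ)) := by
    rw [eq_div_iff (ne_of_gt (mul_pos hfac1 hfac2))]; exact hkey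
  rw [hcat]
  rw [eq_div_iff (by positivity : (2 * (4:ℝ)^n) ≠ 0)]
  field_simp at hreal ⊢
  linear_combination (-1 : ℝ) * hreal + ((2*n).factorial:ℝ) * hπ

lemma wEq (n : ℕ) : ∀ t ∈ Set.Icc (0:ℝ) 1,
    t^n * Real.sqrt ((1-t)/t) = t ^ ((n:ℝ) - 1/2) * (1-t) ^ ((1:ℝ)/2) := by
  intro t ht
  rcases eq_or_lt_of_le ht.1 with h0 | h0
  · subst h0
    simp only [div_zero, Real.sqrt_zero, mul_zero]
    rcases Nat.eq_zero_or_pos n with hn | hn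
    · subst hn
      rw [show ((0:ℕ):ℝ) - 1/2 = -(1/2) by norm_num,
        Real.zero_rpow (by norm_num : -(1/2 : ℝ) ≠ 0)]
      ring
    · rw [Real.zero_rpow (by
        have : (1:ℝ) ≤ (n:ℝ) := by exact_mod_cast hn
        intro h; nlinarith)]
      ring
  · have h1 : (0:ℝ) ≤ 1 - t := by linarith [ht.2]
    rw [Real.sqrt_eq_rpow, Real.div_rpow h1 h0.le, ← Real.rpow_natCast t n,
      Real.rpow_sub h0]
    ring

lemma wIntegrable (n : ℕ) :
    IntervalIntegrable (fun t => t^n * Real.sqrt ((1-t)/t)) MeasureTheory.volume 0 1 := by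
  have hmaj : IntervalIntegrable (fun t : ℝ => t ^ (-(1:ℝ)/2)) MeasureTheory.volume 0 1 :=
    intervalIntegral.intervalIntegrable_rpow' (by norm_num)
  have hmeas : MeasureTheory.AEStronglyMeasurable (fun t : ℝ => t^n * Real.sqrt ((1-t)/t))
      (MeasureTheory.volume.restrict (Set.uIoc (0:ℝ) 1)) := by
    refine Measurable.aestronglyMeasurable ?_
    fun_prop
  refine hmaj.mono_fun hmeas ?_
  rw [Set.uIoc_of_le (by norm_num : (0:ℝ) ≤ 1)]
  refine (MeasureTheory.ae_restrict_iff' measurableSet_Ioc).2 (Filter.Eventually.of_forall ?_)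
  intro t ht
  have h0 : 0 < t := ht.1
  have h1 : (0:ℝ) ≤ 1 - t := by linarith [ht.2]
  simp only []
  rw [wEq n t ⟨h0.le, ht.2⟩]
  have hnn : 0 ≤ t ^ ((n:ℝ) - 1/2) * (1-t) ^ ((1:ℝ)/2) := by positivity
  rw [Real.norm_of_nonneg hnn, Real.norm_of_nonneg (Real.rpow_nonneg h0.le _)]
  calc t ^ ((n:ℝ) - 1/2) * (1-t) ^ ((1:ℝ)/2)
      ≤ t ^ ((n:ℝ) - 1/2) * 1 := by
        refine mul_le_mul_of_nonneg_left ?_ (Real.rpow_nonneg h0.le _)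
        exact Real.rpow_le_one h1 (by linarith [ht.2]) (by norm_num)
    _ ≤ t ^ (-(1:ℝ)/2) := by
        rw [mul_one]
        exact Real.rpow_le_rpow_of_exponent_ge h0 ht.2 (by
          have : (0:ℝ) ≤ (n:ℝ) := Nat.cast_nonneg n
          linarith)

lemma wVal (n : ℕ) :
    ∫ t in (0:ℝ)..1, t^n * Real.sqrt ((1-t)/t) = π * catalan n / (2 * 4^n) := by
  rw [← betaVal n]
  refine intervalIntegral.integral_congr fun t ht => ?_
  rw [Set.uIcc_of_le (by norm_num : (0:ℝ) ≤ 1)] at ht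
  exact wEq n t ht

lemma catPartial (N : ℕ) :
    ∑ n ∈ Finset.range N, (catalan n : ℝ) * (1/4)^n
      = 2 - 2 * (Nat.centralBinom N : ℝ) * (1/4)^N := by
  induction N with
  | zero => norm_num [Nat.centralBinom]
  | succ N ih =>
      rw [Finset.sum_range_succ, ih]
      have h1 : ((N:ℝ) + 1) * (Nat.centralBinom (N+1) : ℝ)
          = 2 * (2*(N:ℝ) + 1) * (Nat.centralBinom N : ℝ) := by
        exact_mod_cast Nat.succ_mul_centralBinom_succ N
      have h2 : ((N:ℝ) + 1) * (catalan N : ℝ) = (Nat.centralBinom N : ℝ) := by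
        exact_mod_cast succ_mul_catalan_eq_centralBinom N
      have hN : ((N:ℝ) + 1) ≠ 0 := by positivity
      have h3 : (Nat.centralBinom (N+1) : ℝ) = 2 * (2*(N:ℝ)+1) * (catalan N : ℝ) := by
        have h4 : ((N:ℝ)+1) * (Nat.centralBinom (N+1) : ℝ)
            = ((N:ℝ)+1) * (2 * (2*(N:ℝ)+1) * (catalan N : ℝ)) := by
          linear_combination h1 - 2*(2*(N:ℝ)+1)*h2
        exact mul_left_cancel₀ hN h4
      rw [h3, pow_succ]
      linear_combination (2*(1/4:ℝ)^N) * h2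

lemma catQle (n : ℕ) : (catalan n : ℝ) * (1/4)^n ≤ 2 := by
  have h := catPartial (n+1)
  have h2 : (catalan n : ℝ) * (1/4)^n ≤ ∑ k ∈ Finset.range (n+1), (catalan k : ℝ) * (1/4)^k := by
    refine Finset.single_le_sum (f := fun k => (catalan k : ℝ) * (1/4)^k) ?_ (Finset.self_mem_range_succ n)
    intro i _
    positivity
  have h3 : (0:ℝ) ≤ 2 * (Nat.centralBinom (n+1) : ℝ) * (1/4)^(n+1) := by positivity
  linarith

lemma catSummable {x : ℝ} (hx : 0 ≤ x) (hx4 : x ≤ 1/4) :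
    Summable (fun n => (catalan n : ℝ) * x^n) := by
  refine summable_of_sum_range_le (c := 2) (fun n => by positivity) (fun N => ?_)
  calc ∑ n ∈ Finset.range N, (catalan n : ℝ) * x^n
      ≤ ∑ n ∈ Finset.range N, (catalan n : ℝ) * (1/4)^n := by
        refine Finset.sum_le_sum fun i _ => ?_
        exact mul_le_mul_of_nonneg_left (pow_le_pow_left₀ hx hx4 i) (Nat.cast_nonneg _)
    _ = 2 - 2 * (Nat.centralBinom N : ℝ) * (1/4)^N := catPartial N
    _ ≤ 2 := by
        have : (0:ℝ) ≤ 2 * (Nat.centralBinom N : ℝ) * (1/4)^N := by positivity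
        linarith

lemma catTsumLe {x : ℝ} (hx : 0 ≤ x) (hx4 : x ≤ 1/4) :
    ∑' n, (catalan n : ℝ) * x^n ≤ 2 := by
  refine tsum_le_of_sum_range_le (fun n => by positivity) (fun N => ?_)
  calc ∑ n ∈ Finset.range N, (catalan n : ℝ) * x^n
      ≤ ∑ n ∈ Finset.range N, (catalan n : ℝ) * (1/4)^n := by
        refine Finset.sum_le_sum fun i _ => ?_
        exact mul_le_mul_of_nonneg_left (pow_le_pow_left₀ hx hx4 i) (Nat.cast_nonneg _)
    _ = 2 - 2 * (Nat.centralBinom N : ℝ) * (1/4)^N := catPartial N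
    _ ≤ 2 := by
        have : (0:ℝ) ≤ 2 * (Nat.centralBinom N : ℝ) * (1/4)^N := by positivity
        linarith

set_option maxHeartbeats 1000000 in
lemma catGF {x : ℝ} (hx : 0 ≤ x) (hx4 : x < 1/4) :
    ∑' n, (catalan n : ℝ) * x^n = 2 / (1 + Real.sqrt (1 - 4*x)) := by
  rcases eq_or_lt_of_le hx with h0 | h0
  · subst h0
    rw [show (1:ℝ) - 4*0 = 1 by ring, Real.sqrt_one]
    rw [tsum_eq_single 0 (fun n hn => by
      rw [zero_pow hn, mul_zero])]
    norm_num
  · have hsum : Summable (fun n => (catalan n : ℝ) * x^n) := catSummable hx hx4.le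
    set g := ∑' n, (catalan n : ℝ) * x^n with hg
    have hgle : g ≤ 2 := catTsumLe hx hx4.le
    have hnorm : Summable (fun n => ‖(catalan n : ℝ) * x^n‖) := by
      refine hsum.congr fun n => ?_
      rw [Real.norm_of_nonneg (by positivity)]
    -- Cauchy product
    have hcauchy : g * g = ∑' n, (catalan (n+1) : ℝ) * x^n := by
      rw [hg, tsum_mul_tsum_eq_tsum_sum_antidiagonal_of_summable_norm hnorm hnorm]
      refine tsum_congr fun n => ?_
      have : ∑ kl ∈ Finset.HasAntidiagonal.antidiagonal n,
          ((catalan kl.1 : ℝ) * x^kl.1) * ((catalan kl.2 : ℝ) * x^kl.2)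
          = ∑ kl ∈ Finset.HasAntidiagonal.antidiagonal n, (catalan kl.1 : ℝ) * (catalan kl.2 : ℝ) * x^n := by
        refine Finset.sum_congr rfl fun kl hkl => ?_
        rw [Finset.HasAntidiagonal.mem_antidiagonal] at hkl
        rw [← hkl, pow_add]; ring
      rw [this, ← Finset.sum_mul, catalan_succ' n]
      push_cast
      ring
    have hshift : Summable (fun n => (catalan (n+1) : ℝ) * x^(n+1)) :=
      (summable_nat_add_iff 1).2 hsum
    have hshift' : Summable (fun n => (catalan (n+1) : ℝ) * x^n) := by
      have := hshift.mul_left (1/x)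
      refine this.congr fun n => ?_
      field_simp [pow_succ]
      ring
    have hquad : x * (g * g) = g - 1 := by
      rw [hcauchy, ← tsum_mul_left]
      have heq : ∀ n, x * ((catalan (n+1) : ℝ) * x^n) = (catalan (n+1) : ℝ) * x^(n+1) := by
        intro n; rw [pow_succ]; ring
      rw [tsum_congr heq]
      have h0add := Summable.tsum_eq_zero_add hsum
      rw [hg]
      rw [h0add]
      simp [catalan_zero]
    -- solve the quadratic
    set r := Real.sqrt (1 - 4*x) with hr
    have hr2 : r^2 = 1 - 4*x := Real.sq_sqrt (by linarith)
    have hrpos : 0 ≤ r := Real.sqrt_nonneg _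
    have hsq : (2*x*g - 1)^2 = r^2 := by
      rw [hr2]; nlinarith [hquad]
    have hneg : 2*x*g - 1 ≤ 0 := by nlinarith [hgle, h0]
    have habs : 2*x*g - 1 = -r := by
      have h1 : |2*x*g - 1| = |r| := by
        rw [← Real.sqrt_sq_eq_abs, ← Real.sqrt_sq_eq_abs, hsq]
      rw [abs_of_nonpos hneg, abs_of_nonneg hrpos] at h1
      linarith
    have hr1 : 0 < 1 + r := by linarith
    rw [eq_div_iff (by positivity : (1:ℝ) + r ≠ 0)]
    nlinarith [habs, hr2, h0]

lemma piProd (f : ℕ → ℝ) (hf : ∀ n, 0 ≤ f n) (hsum : Summable f) (s : ℕ) :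
    Summable (fun m : Fin s → ℕ => ∏ i, f (m i)) ∧
      ∑' m : Fin s → ℕ, ∏ i, f (m i) = (∑' n, f n)^s := by
  induction s with
  | zero =>
      constructor
      · exact Summable.of_finite
      · rw [pow_zero]
        rw [tsum_eq_single (default : Fin 0 → ℕ) (fun b hb => absurd (Subsingleton.elim b default) hb)]
        simp
  | succ s ih =>
      obtain ⟨ihs, ihe⟩ := ih
      have hcomp : ∀ p : ℕ × (Fin s → ℕ),
          (∏ i, f ((Fin.consEquiv (fun _ => ℕ)) p i)) = f p.1 * ∏ i, f (p.2 i) := by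
        intro p
        rw [Fin.prod_univ_succ]
        simp [Fin.consEquiv]
      have hG0 : ∀ m : Fin s → ℕ, 0 ≤ ∏ i, f (m i) := fun m => Finset.prod_nonneg fun i _ => hf _
      have hprodsum : Summable (fun p : ℕ × (Fin s → ℕ) => f p.1 * ∏ i, f (p.2 i)) :=
        Summable.mul_of_nonneg (f := f) (g := fun m : Fin s → ℕ => ∏ i, f (m i))
          hsum ihs hf hG0
      have hsum' : Summable (fun m : Fin (s+1) → ℕ => ∏ i, f (m i)) := by
        rw [← (Fin.consEquiv (fun _ => ℕ)).summable_iff]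
        exact hprodsum.congr fun p => (hcomp p).symm
      refine ⟨hsum', ?_⟩
      rw [← (Fin.consEquiv (fun _ => ℕ)).tsum_eq (fun m : Fin (s+1) → ℕ => ∏ i, f (m i))]
      rw [tsum_congr hcomp]
      rw [← Summable.tsum_mul_tsum hsum ihs hprodsum]
      rw [ihe, pow_succ]
      ring


/-- The star sum `A_s = ∑_{m ∈ ℕ^s} Cat_{m₁}⋯Cat_{m_s} · Cat_{m₁+⋯+m_s} · 16^{−(m₁+⋯+m_s)}`. -/
noncomputable def starSum (s : ℕ) : ℝ :=
  ∑' m : Fin s → ℕ,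
    (∏ i, (catalan (m i) : ℝ)) * (catalan (∑ i, m i) : ℝ) * ((16 : ℝ) ^ (∑ i, m i))⁻¹

/-- For `s ≥ 1`, `A_s = (2/π) ∫₀¹ √((1−t)/t) · (2/(1+√(1−t)))^s dt`. -/
theorem stmt_14 (s : ℕ) (hs : 1 ≤ s) :
    starSum s =
      2 / π * ∫ t in (0 : ℝ)..1,
        Real.sqrt ((1 - t) / t) * (2 / (1 + Real.sqrt (1 - t))) ^ s := by
  classical
  set q : ℕ → ℝ := fun n => (catalan n : ℝ) * (1/4)^n with hq
  have hq0 : ∀ n, 0 ≤ q n := fun n => by positivity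
  have hqsum : Summable q := catSummable (by norm_num) (by norm_num)
  set F : (Fin s → ℕ) → ℝ → ℝ := fun m t =>
    (∏ i, (catalan (m i) : ℝ) * (t/4)^(m i)) * Real.sqrt ((1-t)/t) with hF
  set V : (Fin s → ℕ) → ℝ := fun m =>
    (∏ i, q (m i)) * (π/2 * q (∑ i, m i)) with hV
  have hV0 : ∀ m, 0 ≤ V m := fun m => by
    have := Finset.prod_nonneg (fun i (_ : i ∈ Finset.univ) => hq0 (m i))
    have := hq0 (∑ i, m i)
    have := Real.pi_pos
    positivity
  -- pointwise rewriting of F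
  have hFfun : ∀ m : Fin s → ℕ, F m = fun t =>
      ((∏ i, (catalan (m i) : ℝ)) * (1/4)^(∑ i, m i)) * (t^(∑ i, m i) * Real.sqrt ((1-t)/t)) := by
    intro m
    funext t
    rw [hF]
    simp only
    rw [Finset.prod_mul_distrib]
    have : ∏ i, (t/4)^(m i) = (t/4)^(∑ i, m i) := Finset.prod_pow_eq_pow_sum _ _ _
    rw [this, div_pow]
    rw [one_div, inv_pow]
    ring
  -- integrability and value of each F m on Ioc 0 1
  have hFint : ∀ m : Fin s → ℕ, IntegrableOn (F m) (Set.Ioc (0:ℝ) 1) volume := by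
    intro m
    rw [hFfun m]
    refine Integrable.const_mul ?_ _
    have := wIntegrable (∑ i, m i)
    rw [intervalIntegrable_iff_integrableOn_Ioc_of_le (by norm_num : (0:ℝ) ≤ 1)] at this
    exact this
  have hFval : ∀ m : Fin s → ℕ, ∫ t in Set.Ioc (0:ℝ) 1, F m t = V m := by
    intro m
    rw [hFfun m, MeasureTheory.integral_const_mul,
      ← intervalIntegral.integral_of_le (by norm_num : (0:ℝ) ≤ 1), wVal]
    rw [hV, hq]
    simp only
    rw [Finset.prod_mul_distrib]
    have : ∏ i : Fin s, ((1:ℝ)/4)^(m i) = ((1:ℝ)/4)^(∑ i, m i) := Finset.prod_pow_eq_pow_sum _ _ _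
    rw [this]
    have h4 : ((4:ℝ))^(∑ i, m i) ≠ 0 := by positivity
    field_simp
    have h14 : ((1:ℝ)/4)^(∑ i, m i) * 4^(∑ i, m i) = 1 := by rw [← mul_pow]; norm_num
    linear_combination (-((∏ i, (catalan (m i) : ℝ)) * (catalan (∑ i, m i) : ℝ))) * h14
  -- summability of V
  have hW := piProd q hq0 hqsum s
  have hVsum : Summable V := by
    refine Summable.of_nonneg_of_le hV0 (fun m => ?_) (hW.1.mul_left π)
    rw [hV]
    simp only
    calc (∏ i, q (m i)) * (π/2 * q (∑ i, m i))
        ≤ (∏ i, q (m i)) * (π/2 * 2) := by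
          refine mul_le_mul_of_nonneg_left ?_ (Finset.prod_nonneg fun i _ => hq0 _)
          refine mul_le_mul_of_nonneg_left ?_ (by positivity)
          exact catQle _
      _ = π * ∏ i, q (m i) := by ring
  -- starSum in terms of V
  have hstar : ∑' m : Fin s → ℕ, V m = (π/2) * starSum s := by
    rw [starSum, ← tsum_mul_left]
    refine tsum_congr fun m => ?_
    rw [hV, hq]
    simp only
    rw [Finset.prod_mul_distrib]
    have : ∏ i : Fin s, ((1:ℝ)/4)^(m i) = ((1:ℝ)/4)^(∑ i, m i) := Finset.prod_pow_eq_pow_sum _ _ _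
    rw [this]
    have h16 : ((16:ℝ))^(∑ i, m i) = 4^(∑ i, m i) * 4^(∑ i, m i) := by
      rw [← mul_pow]; norm_num
    rw [h16]
    have h4 : ((4:ℝ))^(∑ i, m i) ≠ 0 := by positivity
    field_simp
    have h14 : ((1:ℝ)/4)^(∑ i, m i) * 4^(∑ i, m i) = 1 := by rw [← mul_pow]; norm_num
    linear_combination ((∏ i, (catalan (m i) : ℝ)) * (catalan (∑ i, m i) : ℝ) * (((1:ℝ)/4)^(∑ i, m i) * 4^(∑ i, m i) + 1)) * h14
  -- swap sum and integral
  have hmeas : ∀ m : Fin s → ℕ,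
      AEStronglyMeasurable (F m) (volume.restrict (Set.Ioc (0:ℝ) 1)) :=
    fun m => (hFint m).aestronglyMeasurable
  have hFnn : ∀ m : Fin s → ℕ, ∀ᵐ t ∂(volume.restrict (Set.Ioc (0:ℝ) 1)), 0 ≤ F m t := by
    intro m
    refine (ae_restrict_iff' measurableSet_Ioc).2 (Filter.Eventually.of_forall fun t ht => ?_)
    rw [hF]
    simp only
    have h1 : 0 ≤ Real.sqrt ((1-t)/t) := Real.sqrt_nonneg _
    refine mul_nonneg (Finset.prod_nonneg fun i _ => ?_) h1
    have : (0:ℝ) ≤ t/4 := by linarith [ht.1]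
    positivity
  have hlint : ∑' m : Fin s → ℕ, ∫⁻ t, ‖F m t‖₊ ∂(volume.restrict (Set.Ioc (0:ℝ) 1)) ≠ ⊤ := by
    have heach : ∀ m : Fin s → ℕ,
        ∫⁻ t, ‖F m t‖₊ ∂(volume.restrict (Set.Ioc (0:ℝ) 1)) = ENNReal.ofReal (V m) := by
      intro m
      rw [← hFval m, MeasureTheory.ofReal_integral_eq_lintegral_ofReal (hFint m) (hFnn m)]
      refine lintegral_congr_ae ?_
      filter_upwards [hFnn m] with t ht
      exact Real.enorm_eq_ofReal ht
    rw [tsum_congr heach, ← ENNReal.ofReal_tsum_of_nonneg hV0 hVsum]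
    exact ENNReal.ofReal_ne_top
  have hswap := MeasureTheory.integral_tsum hmeas hlint
  -- pointwise evaluation of the series on Ioo 0 1
  have hpt : ∀ t ∈ Set.Ioo (0:ℝ) 1,
      ∑' m : Fin s → ℕ, F m t
        = Real.sqrt ((1-t)/t) * (2 / (1 + Real.sqrt (1 - t))) ^ s := by
    intro t ht
    have ht4 : 0 ≤ t/4 := by linarith [ht.1]
    have ht4' : t/4 < 1/4 := by linarith [ht.2]
    have hg := piProd (fun n => (catalan n : ℝ) * (t/4)^n)
      (fun n => by positivity) (catSummable ht4 ht4'.le) s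
    calc ∑' m : Fin s → ℕ, F m t
        = (∑' m : Fin s → ℕ, ∏ i, (catalan (m i) : ℝ) * (t/4)^(m i)) * Real.sqrt ((1-t)/t) := by
          rw [hF]; exact tsum_mul_right
      _ = (∑' n, (catalan n : ℝ) * (t/4)^n)^s * Real.sqrt ((1-t)/t) := by rw [hg.2]
      _ = Real.sqrt ((1-t)/t) * (2 / (1 + Real.sqrt (1 - t))) ^ s := by
          rw [catGF ht4 ht4']
          rw [show (1:ℝ) - 4*(t/4) = 1 - t by ring]
          ring
  -- put everything together
  have hIoc : ∫ t in Set.Ioc (0:ℝ) 1, (∑' m : Fin s → ℕ, F m t)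
      = ∫ t in (0:ℝ)..1, Real.sqrt ((1 - t) / t) * (2 / (1 + Real.sqrt (1 - t))) ^ s := by
    rw [intervalIntegral.integral_of_le (by norm_num : (0:ℝ) ≤ 1),
      MeasureTheory.integral_Ioc_eq_integral_Ioo, MeasureTheory.integral_Ioc_eq_integral_Ioo]
    exact setIntegral_congr_fun measurableSet_Ioo fun t ht => hpt t ht
  have hπ : (π:ℝ) ≠ 0 := Real.pi_ne_zero
  have hfinal : (π/2) * starSum s
      = ∫ t in (0:ℝ)..1, Real.sqrt ((1 - t) / t) * (2 / (1 + Real.sqrt (1 - t))) ^ s := by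
    rw [← hstar, ← hIoc]
    rw [hswap]
    exact (tsum_congr fun m => (hFval m)).symm
  rw [← hfinal]
  field_simp
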